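/- The Shapley GCM does not satisfy Transaction Bundling: there exist a makespan function v satisfying (S1)–(S4), a finite set T, and transactions tx1, tx2 not in T with concatenation tx3 such that gas^S_{T∪{tx1,tx2}}(tx1) + gas^S_{T∪{tx1,tx2}}(tx2) > gas^S_{T∪{tx3}}(tx3). In particular, for T = {tx4} with tx1 ≃ (1,{k2}), tx2 ≃ (1,{k2}), tx3 ≃ (2,{k2}), tx4 ≃ (1,{k1}) and v the optimal-scheduler makespan on at least 2 threads, the left-hand side is 10/6 while the right-hand side is 3/2. -/

import Mathlib

/-- The Shapley GCM. -/
noncomputable def shapleyGas {Tx : Type} [DecidableEq Tx]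
    (v : Finset Tx → ℝ) (T : Finset Tx) (tx : Tx) : ℝ :=
  ∑ S ∈ (T.erase tx).powerset,
    ((S.card.factorial * (T.card - S.card - 1).factorial : ℝ) / (T.card.factorial : ℝ))
      * (v (insert tx S) - v S)

/-- Execution times of `tx1 ≃ (1,{k2})`, `tx2 ≃ (1,{k2})`, `tx3 ≃ (2,{k2})`,
`tx4 ≃ (1,{k1})` (indices `0,1,2,3`); `tx3` is the concatenation of `tx1` and
`tx2`. -/
noncomputable def tTx8 : Fin 4 → ℝ := ![1, 1, 2, 1]

/-- Storage key sets (keys `k1 = 0`, `k2 = 1`). -/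
def keysTx8 : Fin 4 → Finset (Fin 2) := ![{1}, {1}, {1}, {0}]

noncomputable def fBund (S : Finset (Fin 4)) : ℝ := ∑ i ∈ S.erase 3, tTx8 i

noncomputable def vBund (S : Finset (Fin 4)) : ℝ :=
  max (fBund S) (if (3 : Fin 4) ∈ S then 1 else 0)

lemma vecTx8_two : (![1, 1, 2, 1] : Fin 4 → ℝ) 2 = 2 := rfl

lemma tTx8_nonneg (i : Fin 4) : 0 ≤ tTx8 i := by
  fin_cases i <;> norm_num [tTx8]

lemma fBund_mono {A B : Finset (Fin 4)} (h : A ⊆ B) : fBund A ≤ fBund B := by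
  apply Finset.sum_le_sum_of_subset_of_nonneg (Finset.erase_subset_erase _ h)
  intro i _ _; exact tTx8_nonneg i

lemma vBund_mono {A B : Finset (Fin 4)} (h : A ⊆ B) : vBund A ≤ vBund B := by
  unfold vBund
  apply max_le_max (fBund_mono h)
  by_cases h3 : (3 : Fin 4) ∈ A
  · simp [h3, h h3]
  · simp [h3]; positivity

lemma fBund_insert {a : Fin 4} {T : Finset (Fin 4)} (ha3 : a ≠ 3) (haT : a ∉ T) :
    fBund (insert a T) = tTx8 a + fBund T := by
  unfold fBund
  rw [Finset.erase_insert_of_ne ha3, Finset.sum_insert (fun h => haT (Finset.mem_of_mem_erase h))]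

lemma vBund_insert_ne3 {a : Fin 4} {T : Finset (Fin 4)} (ha3 : a ≠ 3) (haT : a ∉ T) :
    vBund (insert a T) = max (tTx8 a + fBund T) (if (3 : Fin 4) ∈ T then 1 else 0) := by
  unfold vBund
  rw [fBund_insert ha3 haT]
  congr 1
  simp [Finset.mem_insert, Ne.symm ha3]

lemma vB_empty : vBund ∅ = 0 := by
  unfold vBund fBund; simp

lemma vB0 : vBund {0} = 1 := by
  unfold vBund fBund
  rw [show (({0} : Finset (Fin 4)).erase 3) = {0} from by decide, Finset.sum_singleton,
    if_neg (by decide)]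
  norm_num [tTx8]

lemma vB1 : vBund {1} = 1 := by
  unfold vBund fBund
  rw [show (({1} : Finset (Fin 4)).erase 3) = {1} from by decide, Finset.sum_singleton,
    if_neg (by decide)]
  norm_num [tTx8]

lemma vB2 : vBund {2} = 2 := by
  unfold vBund fBund
  rw [show (({2} : Finset (Fin 4)).erase 3) = {2} from by decide, Finset.sum_singleton,
    if_neg (by decide)]
  norm_num [tTx8, vecTx8_two]

lemma vB3 : vBund {3} = 1 := by
  unfold vBund fBund
  rw [show (({3} : Finset (Fin 4)).erase 3) = ∅ from by decide, Finset.sum_empty,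
    if_pos (by decide)]
  norm_num

lemma vB01 : vBund {0, 1} = 2 := by
  unfold vBund fBund
  rw [show (({0, 1} : Finset (Fin 4)).erase 3) = {0, 1} from by decide,
    Finset.sum_insert (by decide), Finset.sum_singleton, if_neg (by decide)]
  norm_num [tTx8]

lemma vB03 : vBund {0, 3} = 1 := by
  unfold vBund fBund
  rw [show (({0, 3} : Finset (Fin 4)).erase 3) = {0} from by decide, Finset.sum_singleton,
    if_pos (by decide)]
  norm_num [tTx8]

lemma vB13 : vBund {1, 3} = 1 := by
  unfold vBund fBund
  rw [show (({1, 3} : Finset (Fin 4)).erase 3) = {1} from by decide, Finset.sum_singleton,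
    if_pos (by decide)]
  norm_num [tTx8]

lemma vB23 : vBund {2, 3} = 2 := by
  unfold vBund fBund
  rw [show (({2, 3} : Finset (Fin 4)).erase 3) = {2} from by decide, Finset.sum_singleton,
    if_pos (by decide)]
  norm_num [tTx8, vecTx8_two]

lemma vB013 : vBund {0, 1, 3} = 2 := by
  unfold vBund fBund
  rw [show (({0, 1, 3} : Finset (Fin 4)).erase 3) = {0, 1} from by decide,
    Finset.sum_insert (by decide), Finset.sum_singleton, if_pos (by decide)]
  norm_num [tTx8]

/-- The Shapley GCM does not satisfy Transaction Bundling: there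
is a makespan function `v` satisfying (S1)–(S4) (the optimal-scheduler makespan
on at least 2 threads), a set `T = {tx4}`, and transactions `tx1, tx2 ∉ T` with
concatenation `tx3` such that
`gas^S_{T∪{tx1,tx2}}(tx1) + gas^S_{T∪{tx1,tx2}}(tx2) = 10/6 > 3/2 = gas^S_{T∪{tx3}}(tx3)`. -/
theorem shapleyGas_not_transaction_bundling :
    ∃ v : Finset (Fin 4) → ℝ,
      -- (S1) monotonicity in T
      (∀ A B : Finset (Fin 4), A ⊆ B → v A ≤ v B) ∧
      -- (S2) monotonicity under bundling
      (∀ (T : Finset (Fin 4)) (a b c : Fin 4), a ∉ T → b ∉ T → c ∉ T → a ≠ b →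
        tTx8 c = tTx8 a + tTx8 b → keysTx8 c = keysTx8 a ∪ keysTx8 b →
        v (insert a (insert b T)) ≤ v (insert c T)) ∧
      -- (S3) monotonicity in t and K
      (∀ (T : Finset (Fin 4)) (a b : Fin 4), a ∉ T → b ∉ T →
        tTx8 a ≤ tTx8 b → keysTx8 a ⊆ keysTx8 b →
        v (insert a T) ≤ v (insert b T)) ∧
      -- (S4) empty set
      v ∅ = 0 ∧
      -- tx3 (= 2) is the concatenation of tx1 (= 0) and tx2 (= 1)
      tTx8 2 = tTx8 0 + tTx8 1 ∧ keysTx8 2 = keysTx8 0 ∪ keysTx8 1 ∧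
      -- the gas values
      shapleyGas v (insert 0 (insert 1 ({3} : Finset (Fin 4)))) 0
        + shapleyGas v (insert 0 (insert 1 ({3} : Finset (Fin 4)))) 1 = 10 / 6 ∧
      shapleyGas v (insert 2 ({3} : Finset (Fin 4))) 2 = 3 / 2 ∧
      shapleyGas v (insert 0 (insert 1 ({3} : Finset (Fin 4)))) 0
          + shapleyGas v (insert 0 (insert 1 ({3} : Finset (Fin 4)))) 1
        > shapleyGas v (insert 2 ({3} : Finset (Fin 4))) 2 := by
  have h1 : shapleyGas vBund (insert 0 (insert 1 ({3} : Finset (Fin 4)))) 0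
      + shapleyGas vBund (insert 0 (insert 1 ({3} : Finset (Fin 4)))) 1 = 10 / 6 := by
    unfold shapleyGas
    rw [show ((insert 0 (insert 1 ({3} : Finset (Fin 4)))).erase 0) = {1, 3} from by decide,
      show ((insert 0 (insert 1 ({3} : Finset (Fin 4)))).erase 1) = {0, 3} from by decide,
      show (({1, 3} : Finset (Fin 4)).powerset) = {∅, {1}, {3}, {1, 3}} from by decide,
      show (({0, 3} : Finset (Fin 4)).powerset) = {∅, {0}, {3}, {0, 3}} from by decide,
      show ((insert 0 (insert 1 ({3} : Finset (Fin 4)))).card) = 3 from by decide]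
    rw [Finset.sum_insert (by decide), Finset.sum_insert (by decide),
      Finset.sum_insert (by decide), Finset.sum_singleton,
      Finset.sum_insert (by decide), Finset.sum_insert (by decide),
      Finset.sum_insert (by decide), Finset.sum_singleton]
    simp only [show (insert (0 : Fin 4) (∅ : Finset (Fin 4))) = {0} from by decide,
      show (insert (1 : Fin 4) (∅ : Finset (Fin 4))) = {1} from by decide,
      show (insert (1 : Fin 4) ({0} : Finset (Fin 4))) = {0, 1} from by decide,
      show (insert (1 : Fin 4) ({0, 3} : Finset (Fin 4))) = {0, 1, 3} from by decide,
      show (insert (1 : Fin 4) ({3} : Finset (Fin 4))) = {1, 3} from by decide,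
      show (insert (0 : Fin 4) ({1} : Finset (Fin 4))) = {0, 1} from by decide,
      show (insert (0 : Fin 4) ({3} : Finset (Fin 4))) = {0, 3} from by decide,
      show (insert (0 : Fin 4) ({1, 3} : Finset (Fin 4))) = {0, 1, 3} from by decide,
      vB_empty, vB0, vB1, vB3, vB01, vB03, vB13, vB013]
    norm_num [Finset.card_empty, Finset.card_singleton, Nat.factorial,
      show (({1, 3} : Finset (Fin 4)).card) = 2 from by decide,
      show (({0, 3} : Finset (Fin 4)).card) = 2 from by decide,
      show (({0, 1} : Finset (Fin 4)).card) = 2 from by decide]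
  have h2 : shapleyGas vBund (insert 2 ({3} : Finset (Fin 4))) 2 = 3 / 2 := by
    unfold shapleyGas
    rw [show ((insert 2 ({3} : Finset (Fin 4))).erase 2) = {3} from by decide,
      show (({3} : Finset (Fin 4)).powerset) = {∅, {3}} from by decide,
      show ((insert 2 ({3} : Finset (Fin 4))).card) = 2 from by decide]
    rw [Finset.sum_insert (by decide), Finset.sum_singleton]
    simp only [show (insert (2 : Fin 4) (∅ : Finset (Fin 4))) = {2} from by decide,
      show (insert (2 : Fin 4) ({3} : Finset (Fin 4))) = {2, 3} from by decide,
      vB_empty, vB2, vB3, vB23]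
    norm_num [Finset.card_empty, Finset.card_singleton, Nat.factorial]
  refine ⟨vBund, fun A B h => vBund_mono h, ?_, ?_, vB_empty, by norm_num [tTx8, vecTx8_two],
    by decide, h1, h2, by rw [h1, h2]; norm_num⟩
  · -- S2
    intro T a b c haT hbT hcT hab htc hkc
    fin_cases a <;> fin_cases b <;> fin_cases c <;>
      first
      | exact absurd rfl hab
      | (exfalso; revert hkc; decide)
      | (norm_num [tTx8] at htc; done)
      | (show vBund (insert 0 (insert 1 T)) ≤ vBund (insert 2 T)
         have e1 : fBund (insert 0 (insert 1 T)) = fBund (insert 2 T) := by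
           rw [fBund_insert (show (0 : Fin 4) ≠ 3 by decide)
                (fun h => ((Finset.mem_insert.mp h).elim
                  (fun h => absurd h (by decide)) haT)),
              fBund_insert (show (1 : Fin 4) ≠ 3 by decide) hbT,
              fBund_insert (show (2 : Fin 4) ≠ 3 by decide) hcT]
           norm_num [tTx8, vecTx8_two]
           ring
         have e2 : ((3 : Fin 4) ∈ insert 0 (insert 1 T)) ↔ ((3 : Fin 4) ∈ insert 2 T) := by
           simp only [Finset.mem_insert]
           simp [(by decide : (3 : Fin 4) ≠ 0), (by decide : (3 : Fin 4) ≠ 1),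
             (by decide : (3 : Fin 4) ≠ 2)]
         unfold vBund
         rw [e1, if_congr e2 rfl rfl])
      | (show vBund (insert 1 (insert 0 T)) ≤ vBund (insert 2 T)
         have e1 : fBund (insert 1 (insert 0 T)) = fBund (insert 2 T) := by
           rw [fBund_insert (show (1 : Fin 4) ≠ 3 by decide)
                (fun h => ((Finset.mem_insert.mp h).elim
                  (fun h => absurd h (by decide)) haT)),
              fBund_insert (show (0 : Fin 4) ≠ 3 by decide) hbT,
              fBund_insert (show (2 : Fin 4) ≠ 3 by decide) hcT]
           norm_num [tTx8, vecTx8_two]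
           ring
         have e2 : ((3 : Fin 4) ∈ insert 1 (insert 0 T)) ↔ ((3 : Fin 4) ∈ insert 2 T) := by
           simp only [Finset.mem_insert]
           simp [(by decide : (3 : Fin 4) ≠ 0), (by decide : (3 : Fin 4) ≠ 1),
             (by decide : (3 : Fin 4) ≠ 2)]
         unfold vBund
         rw [e1, if_congr e2 rfl rfl])
  · -- S3
    intro T a b haT hbT ht hk
    fin_cases a <;> fin_cases b <;>
      first
      | exact le_rfl
      | (exfalso; revert hk; decide)
      | (rw [vBund_insert_ne3 (by decide) haT, vBund_insert_ne3 (by decide) hbT]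
         exact max_le_max (add_le_add_left ht _) le_rfl)
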